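/- arXiv:2203.12959 — 3 statements merged into one kernel-verified Lean document; each statement's English description precedes it below -/
import Mathlib

section
/- Let N ∈ Π_{q,r}. Let x ∈ ℝ^q and y ∈ ℝ^r be vectors with x nonzero such that [x; y]ᵀ N [x; y] ≥ 0. Then there exists a matrix Z ∈ Z_r(N) such that y = Zx. -/
open Matrix
open scoped Classical

/-- The Moore–Penrose pseudoinverse of a real matrix, defined via its four
characterizing Penrose conditions (which determine it uniquely). -/
noncomputable def pinv {m n : ℕ} (A : Matrix (Fin m) (Fin n) ℝ) : Matrix (Fin n) (Fin m) ℝ :=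
  if h : ∃ B : Matrix (Fin n) (Fin m) ℝ,
      A * B * A = A ∧ B * A * B = B ∧ (A * B)ᵀ = A * B ∧ (B * A)ᵀ = B * A
  then h.choose else 0

/-- The unique positive semidefinite square root of a positive semidefinite matrix
(defined by its characterizing property, which determines it uniquely). -/
noncomputable def msqrt {n : ℕ} (A : Matrix (Fin n) (Fin n) ℝ) : Matrix (Fin n) (Fin n) ℝ :=
  if h : ∃ B : Matrix (Fin n) (Fin n) ℝ, B.PosSemidef ∧ B * B = A then h.choose else 0

/-- The quadratic matrix expression `[I; Z]ᵀ Π [I; Z]`. -/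
noncomputable def qmi {q r : ℕ} (P : Matrix (Fin q ⊕ Fin r) (Fin q ⊕ Fin r) ℝ)
    (Z : Matrix (Fin r) (Fin q) ℝ) : Matrix (Fin q) (Fin q) ℝ :=
  (fromRows (1 : Matrix (Fin q) (Fin q) ℝ) Z)ᵀ * P * fromRows 1 Z

/-- The solution set `Z_r(Π)` of the nonstrict QMI. -/
def ZrSet {q r : ℕ} (P : Matrix (Fin q ⊕ Fin r) (Fin q ⊕ Fin r) ℝ) :
    Set (Matrix (Fin r) (Fin q) ℝ) := {Z | (qmi P Z).PosSemidef}

/-- The solution set `Z_r⁺(Π)` of the strict QMI. -/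
def ZrPlusSet {q r : ℕ} (P : Matrix (Fin q ⊕ Fin r) (Fin q ⊕ Fin r) ℝ) :
    Set (Matrix (Fin r) (Fin q) ℝ) := {Z | (qmi P Z).PosDef}

/-- The solution set `Z_r⁰(Π)` of the quadratic matrix equality. -/
def ZrZeroSet {q r : ℕ} (P : Matrix (Fin q ⊕ Fin r) (Fin q ⊕ Fin r) ℝ) :
    Set (Matrix (Fin r) (Fin q) ℝ) := {Z | qmi P Z = 0}

/-- Generalized Schur complement `Π|Π₂₂ = Π₁₁ − Π₁₂ Π₂₂^† Π₂₁`. -/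
noncomputable def schurC {q r : ℕ} (P : Matrix (Fin q ⊕ Fin r) (Fin q ⊕ Fin r) ℝ) :
    Matrix (Fin q) (Fin q) ℝ :=
  P.toBlocks₁₁ - P.toBlocks₁₂ * pinv P.toBlocks₂₂ * P.toBlocks₂₁

/-- Membership in the class `Π_{q,r}`: symmetric, `Π₂₂ ⪯ 0`, `Π|Π₂₂ ⪰ 0`,
and `ker Π₂₂ ⊆ ker Π₁₂`. -/
def memPi {q r : ℕ} (P : Matrix (Fin q ⊕ Fin r) (Fin q ⊕ Fin r) ℝ) : Prop :=
  P.IsSymm ∧ (-P.toBlocks₂₂).PosSemidef ∧ (schurC P).PosSemidef ∧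
    ∀ x : Fin r → ℝ, P.toBlocks₂₂ *ᵥ x = 0 → P.toBlocks₁₂ *ᵥ x = 0

lemma exists_penrose {n : ℕ} {A : Matrix (Fin n) (Fin n) ℝ} (hA : A.IsHermitian) :
    ∃ B : Matrix (Fin n) (Fin n) ℝ,
      A * B * A = A ∧ B * A * B = B ∧ (A * B)ᵀ = A * B ∧ (B * A)ᵀ = B * A := by
  classical
  obtain ⟨U, d, hU1, hU2, hAeq⟩ : ∃ (U : Matrix (Fin n) (Fin n) ℝ) (d : Fin n → ℝ),
      Uᵀ * U = 1 ∧ U * Uᵀ = 1 ∧ A = U * diagonal d * Uᵀ := by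
    refine ⟨hA.eigenvectorUnitary, hA.eigenvalues, ?_, ?_, ?_⟩
    · have := Unitary.coe_star_mul_self hA.eigenvectorUnitary
      simpa [Matrix.star_eq_conjTranspose, Matrix.conjTranspose_eq_transpose_of_trivial] using this
    · have := Unitary.coe_mul_star_self hA.eigenvectorUnitary
      simpa [Matrix.star_eq_conjTranspose, Matrix.conjTranspose_eq_transpose_of_trivial] using this
    · have := hA.spectral_theorem
      simpa [Matrix.star_eq_conjTranspose, Matrix.conjTranspose_eq_transpose_of_trivial,
        Function.comp] using this
  have key : ∀ X Y : Matrix (Fin n) (Fin n) ℝ,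
      (U * X * Uᵀ) * (U * Y * Uᵀ) = U * (X * Y) * Uᵀ := by
    intro X Y
    calc (U * X * Uᵀ) * (U * Y * Uᵀ) = U * (X * ((Uᵀ * U) * (Y * Uᵀ))) := by
          simp only [Matrix.mul_assoc]
      _ = U * (X * Y) * Uᵀ := by rw [hU1, Matrix.one_mul]; simp only [Matrix.mul_assoc]
  have keyT : ∀ e : Fin n → ℝ, (U * diagonal e * Uᵀ)ᵀ = U * diagonal e * Uᵀ := by
    intro e
    simp [Matrix.transpose_mul, Matrix.diagonal_transpose, Matrix.mul_assoc]
  refine ⟨U * diagonal (fun i => (d i)⁻¹) * Uᵀ, ?_, ?_, ?_, ?_⟩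
  · rw [hAeq, key, key, diagonal_mul_diagonal, diagonal_mul_diagonal]
    have hd : (fun i => d i * (d i)⁻¹ * d i) = d := by
      funext i
      rcases eq_or_ne (d i) 0 with h | h
      · simp [h]
      · field_simp
    rw [hd]
  · rw [hAeq, key, key, diagonal_mul_diagonal, diagonal_mul_diagonal]
    have hd : (fun i => (d i)⁻¹ * d i * (d i)⁻¹) = fun i => (d i)⁻¹ := by
      funext i
      rcases eq_or_ne (d i) 0 with h | h
      · simp [h]
      · field_simp
    rw [hd]
  · rw [hAeq, key, diagonal_mul_diagonal]; exact keyT _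
  · rw [hAeq, key, diagonal_mul_diagonal]; exact keyT _

lemma pinv_spec {n : ℕ} {A : Matrix (Fin n) (Fin n) ℝ} (hA : A.IsHermitian) :
    A * pinv A * A = A ∧ pinv A * A * pinv A = pinv A ∧
      (A * pinv A)ᵀ = A * pinv A ∧ (pinv A * A)ᵀ = pinv A * A := by
  have hex := exists_penrose hA
  unfold pinv
  rw [dif_pos hex]
  exact hex.choose_spec

lemma eq_of_mulVec_eq {m n : ℕ} {A B : Matrix (Fin m) (Fin n) ℝ}
    (h : ∀ v, A *ᵥ v = B *ᵥ v) : A = B := by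
  ext i j
  have := congrFun (h (Pi.single j 1)) i
  simpa using this

lemma vecMulVec_mulVec' {m n : ℕ} (u : Fin m → ℝ) (x : Fin n → ℝ) (v : Fin n → ℝ) :
    vecMulVec u x *ᵥ v = (x ⬝ᵥ v) • u := by
  ext i
  simp only [mulVec, dotProduct, vecMulVec_apply, Pi.smul_apply, smul_eq_mul, Finset.sum_mul]
  exact Finset.sum_congr rfl fun j _ => by ring

lemma cs_psd {n : ℕ} {S : Matrix (Fin n) (Fin n) ℝ} (hS : S.PosSemidef)
    (x v : Fin n → ℝ) : (v ⬝ᵥ S *ᵥ x) ^ 2 ≤ (x ⬝ᵥ S *ᵥ x) * (v ⬝ᵥ S *ᵥ v) := by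
  obtain ⟨L, rfl⟩ : ∃ L : Matrix (Fin n) (Fin n) ℝ, S = Lᴴ * L := by
    open scoped MatrixOrder in
    obtain ⟨B, hB⟩ := CStarAlgebra.nonneg_iff_eq_star_mul_self.mp hS.nonneg
    exact ⟨B, hB⟩
  have key : ∀ a b : Fin n → ℝ, a ⬝ᵥ (Lᴴ * L) *ᵥ b = (L *ᵥ a) ⬝ᵥ (L *ᵥ b) := by
    intro a b
    rw [← mulVec_mulVec, dotProduct_mulVec, conjTranspose_eq_transpose_of_trivial,
      vecMul_transpose]
  rw [key, key, key]
  have h := Finset.sum_mul_sq_le_sq_mul_sq Finset.univ (L *ᵥ x) (L *ᵥ v)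
  calc ((L *ᵥ v) ⬝ᵥ (L *ᵥ x)) ^ 2 = (∑ i, (L *ᵥ x) i * (L *ᵥ v) i) ^ 2 := by
        rw [dotProduct_comm]; rfl
    _ ≤ (∑ i, (L *ᵥ x) i ^ 2) * (∑ i, (L *ᵥ v) i ^ 2) := h
    _ = ((L *ᵥ x) ⬝ᵥ (L *ᵥ x)) * ((L *ᵥ v) ⬝ᵥ (L *ᵥ v)) := by
        simp [dotProduct, sq]

lemma qmi_def {q r : ℕ} (P : Matrix (Fin q ⊕ Fin r) (Fin q ⊕ Fin r) ℝ)
    (Z : Matrix (Fin r) (Fin q) ℝ) : qmi P Z = @HMul.hMul _ _ (Matrix (Fin q) (Fin q) ℝ)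
      Matrix.instHMulOfFintypeOfMulOfAddCommMonoid ((fromRows (1 : Matrix (Fin q) (Fin q) ℝ) Z)ᵀ * P) (fromRows 1 Z) := rfl

lemma qmi_isHermitian {q r : ℕ} {P : Matrix (Fin q ⊕ Fin r) (Fin q ⊕ Fin r) ℝ}
    (hP : P.IsSymm) (Z : Matrix (Fin r) (Fin q) ℝ) : (qmi P Z).IsHermitian := by
  show (qmi P Z)ᴴ = qmi P Z
  rw [conjTranspose_eq_transpose_of_trivial]
  rw [qmi_def]
  rw [transpose_mul, transpose_mul, transpose_transpose, hP.eq, Matrix.mul_assoc]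

lemma qmi_quadform {q r : ℕ} (P : Matrix (Fin q ⊕ Fin r) (Fin q ⊕ Fin r) ℝ)
    (Z : Matrix (Fin r) (Fin q) ℝ) (v : Fin q → ℝ) :
    v ⬝ᵥ qmi P Z *ᵥ v = Sum.elim v (Z *ᵥ v) ⬝ᵥ P *ᵥ Sum.elim v (Z *ᵥ v) := by
  rw [qmi_def]
  rw [← mulVec_mulVec, ← mulVec_mulVec, dotProduct_mulVec, vecMul_transpose,
    fromRows_mulVec, one_mulVec]

/-- For `N ∈ Π_{q,r}` and vectors `x ≠ 0`, `y` with
`[x; y]ᵀ N [x; y] ≥ 0`, there exists `Z ∈ Z_r(N)` with `y = Zx`. -/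
theorem stmt_10 {q r : ℕ} (N : Matrix (Fin q ⊕ Fin r) (Fin q ⊕ Fin r) ℝ) (hN : memPi N)
    (x : Fin q → ℝ) (y : Fin r → ℝ) (hx : x ≠ 0)
    (h : 0 ≤ Sum.elim x y ⬝ᵥ (N *ᵥ Sum.elim x y)) :
    ∃ Z ∈ ZrSet N, Z *ᵥ x = y := by
  obtain ⟨hNsym, hD0, hS0, hker⟩ := hN
  set A := N.toBlocks₁₁ with hAdef
  set B := N.toBlocks₁₂ with hBdef
  set C := N.toBlocks₂₁ with hCdef
  set D := N.toBlocks₂₂ with hDdef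
  set M := pinv D with hMdef
  set S := schurC N with hSdef
  have hsym : ∀ a b, N a b = N b a := by
    intro a b
    have := congrFun (congrFun hNsym a) b
    simpa [Matrix.transpose_apply] using this.symm
  have hBC : Bᵀ = C := by
    ext i j
    simp only [hBdef, hCdef, toBlocks₁₂, toBlocks₂₁, transpose_apply, of_apply]
    exact hsym _ _
  have hDsym : Dᵀ = D := by
    ext i j
    simp only [hDdef, toBlocks₂₂, transpose_apply, of_apply]
    exact hsym _ _
  have hDherm : D.IsHermitian := by
    show Dᴴ = D
    rw [conjTranspose_eq_transpose_of_trivial]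
    exact hDsym
  obtain ⟨P1, P2, P3, P4⟩ := pinv_spec hDherm
  rw [← hMdef] at P1 P2 P3 P4
  have f1 : Mᵀ * D = D * M := by
    calc Mᵀ * D = Mᵀ * Dᵀ := by rw [hDsym]
      _ = (D * M)ᵀ := (transpose_mul D M).symm
      _ = D * M := P3
  have f3 : D * (D * M) = D := by
    have h1 : (D * (D * M))ᵀ = D := by
      rw [transpose_mul, P3, hDsym, P1]
    calc D * (D * M) = ((D * (D * M))ᵀ)ᵀ := (transpose_transpose _).symm
      _ = Dᵀ := by rw [h1]
      _ = D := hDsym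
  have f4 : B * (D * M) = B := by
    apply eq_of_mulVec_eq
    intro v
    have hDv : D *ᵥ (v - (D * M) *ᵥ v) = 0 := by
      rw [mulVec_sub, mulVec_mulVec, f3, sub_self]
    have h2 := hker _ hDv
    rw [mulVec_sub, mulVec_mulVec, sub_eq_zero] at h2
    exact h2.symm
  have f5 : D * (M * C) = C := by
    have hCB : Cᵀ = B := by rw [← hBC, transpose_transpose]
    have h1 : (D * (M * C))ᵀ = B := by
      rw [transpose_mul, transpose_mul, hDsym, hCB, Matrix.mul_assoc, f1, ← Matrix.mul_assoc,
        Matrix.mul_assoc, f4]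
    calc D * (M * C) = ((D * (M * C))ᵀ)ᵀ := (transpose_transpose _).symm
      _ = Bᵀ := by rw [h1]
      _ = C := hBC
  -- key scalar decomposition
  have key_decomp : ∀ (p : Fin q → ℝ) (w : Fin r → ℝ),
      Sum.elim p w ⬝ᵥ N *ᵥ Sum.elim p w =
        p ⬝ᵥ S *ᵥ p + (w + M *ᵥ (C *ᵥ p)) ⬝ᵥ D *ᵥ (w + M *ᵥ (C *ᵥ p)) := by
    intro p w
    have hg1 : D *ᵥ (M *ᵥ (C *ᵥ p)) = C *ᵥ p := by
      rw [mulVec_mulVec, mulVec_mulVec, Matrix.mul_assoc, f5]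
    have hvB : ∀ z : Fin r → ℝ, p ⬝ᵥ B *ᵥ z = (C *ᵥ p) ⬝ᵥ z := by
      intro z
      rw [dotProduct_mulVec]
      congr 1
      rw [← mulVec_transpose, hBC]
    have hSp : S *ᵥ p = A *ᵥ p - B *ᵥ (M *ᵥ (C *ᵥ p)) := by
      rw [hSdef]
      show (A - B * M * C) *ᵥ p = _
      rw [sub_mulVec, Matrix.mul_assoc, ← mulVec_mulVec, ← mulVec_mulVec]
    have e3 : (M *ᵥ (C *ᵥ p)) ⬝ᵥ (D *ᵥ w) = (C *ᵥ p) ⬝ᵥ w := by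
      rw [dotProduct_mulVec]
      congr 1
      rw [← mulVec_transpose, hDsym, hg1]
    conv_lhs => rw [← fromBlocks_toBlocks N, ← hAdef, ← hBdef, ← hCdef, ← hDdef]
    rw [fromBlocks_mulVec, sumElim_dotProduct_sumElim]
    simp only [Sum.elim_comp_inl, Sum.elim_comp_inr]
    rw [hSp, mulVec_add, hg1]
    simp only [dotProduct_add, add_dotProduct, dotProduct_sub]
    rw [hvB w, hvB (M *ᵥ (C *ᵥ p)), e3, dotProduct_comm (M *ᵥ (C *ᵥ p)) (C *ᵥ p),
      dotProduct_comm w (C *ᵥ p)]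
    ring
  set u := y + M *ᵥ (C *ᵥ x) with hu
  rw [key_decomp x y, ← hu] at h
  set α := x ⬝ᵥ S *ᵥ x with hα
  set γ := u ⬝ᵥ D *ᵥ u with hγ
  have hstar : ∀ (k : ℕ) (v : Fin k → ℝ), star v = v := fun k v => funext fun i => rfl
  have hγ0 : γ ≤ 0 := by
    have h2 := hD0.dotProduct_mulVec_nonneg u
    rw [hstar] at h2
    rw [neg_mulVec, dotProduct_neg] at h2
    linarith
  have hZmem : ∀ W : Matrix (Fin r) (Fin q) ℝ,
      (∀ v : Fin q → ℝ, 0 ≤ v ⬝ᵥ S *ᵥ v + (W *ᵥ v) ⬝ᵥ D *ᵥ (W *ᵥ v)) →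
      (W - M * C) ∈ ZrSet N := by
    intro W hW
    refine PosSemidef.of_dotProduct_mulVec_nonneg (qmi_isHermitian hNsym _) ?_
    intro v
    rw [hstar]
    rw [qmi_quadform, key_decomp v ((W - M * C) *ᵥ v)]
    have hWv : (W - M * C) *ᵥ v + M *ᵥ (C *ᵥ v) = W *ᵥ v := by
      rw [sub_mulVec, mulVec_mulVec, sub_add_cancel]
    rw [hWv]
    exact hW v
  have hZx : ∀ W : Matrix (Fin r) (Fin q) ℝ, W *ᵥ x = u → (W - M * C) *ᵥ x = y := by
    intro W hWx
    rw [sub_mulVec, hWx, hu, mulVec_mulVec]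
    exact add_sub_cancel_right y _
  rcases eq_or_lt_of_le hγ0 with hγz | hγneg
  · -- γ = 0 : D u = 0
    have hDu : D *ᵥ u = 0 := by
      have h0 : star u ⬝ᵥ (-D) *ᵥ u = 0 := by
        rw [hstar, neg_mulVec, dotProduct_neg, ← hγ, hγz, neg_zero]
      have := (hD0.dotProduct_mulVec_zero_iff u).mp h0
      rw [neg_mulVec, neg_eq_zero] at this
      exact this
    have hxx : (0:ℝ) < x ⬝ᵥ x := by
      rcases lt_or_eq_of_le (Finset.sum_nonneg fun i _ => mul_self_nonneg (x i)) with h' | h'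
      · exact h'
      · exact absurd (dotProduct_self_eq_zero.mp h'.symm) hx
    set W := (x ⬝ᵥ x)⁻¹ • vecMulVec u x with hW
    have hWv : ∀ v, W *ᵥ v = ((x ⬝ᵥ x)⁻¹ * (x ⬝ᵥ v)) • u := by
      intro v
      rw [hW, smul_mulVec, vecMulVec_mulVec', smul_smul]
    refine ⟨W - M * C, hZmem W ?_, hZx W ?_⟩
    · intro v
      rw [hWv v, mulVec_smul, hDu, smul_zero, dotProduct_zero, add_zero]
      have := hS0.dotProduct_mulVec_nonneg v
      rwa [hstar] at this
    · rw [hWv x, inv_mul_cancel₀ (ne_of_gt hxx), one_smul]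
  · -- γ < 0
    have hαpos : 0 < α := by linarith
    set W := α⁻¹ • vecMulVec u (S *ᵥ x) with hW
    have hWv : ∀ v, W *ᵥ v = (α⁻¹ * ((S *ᵥ x) ⬝ᵥ v)) • u := by
      intro v
      rw [hW, smul_mulVec, vecMulVec_mulVec', smul_smul]
    refine ⟨W - M * C, hZmem W ?_, hZx W ?_⟩
    · intro v
      rw [hWv v]
      set t := α⁻¹ * ((S *ᵥ x) ⬝ᵥ v) with ht
      rw [mulVec_smul, dotProduct_smul, smul_dotProduct]
      have hcs : ((S *ᵥ x) ⬝ᵥ v) ^ 2 ≤ α * (v ⬝ᵥ S *ᵥ v) := by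
        rw [dotProduct_comm (S *ᵥ x) v, hα]
        exact cs_psd hS0 x v
      have hsv : 0 ≤ v ⬝ᵥ S *ᵥ v := by
        have := hS0.dotProduct_mulVec_nonneg v
        rwa [hstar] at this
      have hane : α ≠ 0 := ne_of_gt hαpos
      rw [ht, smul_eq_mul, smul_eq_mul]
      show 0 ≤ v ⬝ᵥ S *ᵥ v + α⁻¹ * ((S *ᵥ x) ⬝ᵥ v) * (α⁻¹ * ((S *ᵥ x) ⬝ᵥ v) * γ)
      set s := v ⬝ᵥ S *ᵥ v with hs
      set d := (S *ᵥ x) ⬝ᵥ v with hd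
      have h2 : α * s * γ ≤ d ^ 2 * γ := mul_le_mul_of_nonpos_right hcs (le_of_lt hγneg)
      have h3 : (α * s * γ) * (α⁻¹ * α⁻¹) ≤ (d ^ 2 * γ) * (α⁻¹ * α⁻¹) :=
        mul_le_mul_of_nonneg_right h2 (by positivity)
      have h4 : (α * s * γ) * (α⁻¹ * α⁻¹) = s * (γ * α⁻¹) := by
        field_simp
      have h5 : 0 ≤ 1 + γ * α⁻¹ := by
        have h6 := mul_nonneg (inv_nonneg.mpr (le_of_lt hαpos)) h
        have h7 : α⁻¹ * (α + γ) = 1 + γ * α⁻¹ := by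
          field_simp
        linarith [h7 ▸ h6]
      calc (0:ℝ) ≤ s * (1 + γ * α⁻¹) := mul_nonneg hsv h5
        _ = s + (α * s * γ) * (α⁻¹ * α⁻¹) := by rw [mul_add, mul_one, h4]
        _ ≤ s + (d ^ 2 * γ) * (α⁻¹ * α⁻¹) := by linarith [h3]
        _ = s + α⁻¹ * d * (α⁻¹ * d * γ) := by ring
    · rw [hWv x, dotProduct_comm (S *ᵥ x) x, ← hα, inv_mul_cancel₀ (ne_of_gt hαpos), one_smul]
end

section
/- Let M, N ∈ S^{q+r} with N ∈ Π_{q,r}, and assume N₂₂ is negative definite. Then the following are equivalent: (i) Z_r(N) ⊆ Z_r⁺(M); (ii) xᵀ M x > 0 for all nonzero x ∈ ℝ^{q+r} satisfying xᵀ N x ≥ 0. -/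
open Matrix
open scoped Classical

lemma pinv_eq_inv {n : ℕ} (A : Matrix (Fin n) (Fin n) ℝ) (hA : IsUnit A.det) :
    pinv A = A⁻¹ := by
  have hex : ∃ B : Matrix (Fin n) (Fin n) ℝ,
      A * B * A = A ∧ B * A * B = B ∧ (A * B)ᵀ = A * B ∧ (B * A)ᵀ = B * A :=
    ⟨A⁻¹, by rw [Matrix.mul_nonsing_inv A hA, Matrix.one_mul],
      by rw [Matrix.nonsing_inv_mul A hA, Matrix.one_mul],
      by rw [Matrix.mul_nonsing_inv A hA, Matrix.transpose_one],
      by rw [Matrix.nonsing_inv_mul A hA, Matrix.transpose_one]⟩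
  have hspec := hex.choose_spec.1
  rw [pinv, dif_pos hex]
  have h4 : A * hex.choose = 1 := by
    have h5 := congrArg (fun X => X * A⁻¹) hspec
    simpa [Matrix.mul_assoc, Matrix.mul_nonsing_inv A hA] using h5
  exact (Matrix.inv_eq_right_inv h4).symm

lemma comp_sq {q r : ℕ} (A : Matrix (Fin q) (Fin q) ℝ) (B : Matrix (Fin q) (Fin r) ℝ)
    (D : Matrix (Fin r) (Fin r) ℝ) (K : Matrix (Fin r) (Fin q) ℝ)
    (hD : Dᵀ = D) (hK : D * K = Bᵀ) (u : Fin q → ℝ) (v : Fin r → ℝ) :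
    u ⬝ᵥ (A *ᵥ u) + u ⬝ᵥ (B *ᵥ v) + (v ⬝ᵥ (Bᵀ *ᵥ u) + v ⬝ᵥ (D *ᵥ v)) =
      u ⬝ᵥ ((A - B * K) *ᵥ u) + (v + K *ᵥ u) ⬝ᵥ (D *ᵥ (v + K *ᵥ u)) := by
  have hDK : D *ᵥ (K *ᵥ u) = Bᵀ *ᵥ u := by rw [mulVec_mulVec, hK]
  have hBt : ∀ w : Fin r → ℝ, u ⬝ᵥ (B *ᵥ w) = (Bᵀ *ᵥ u) ⬝ᵥ w := by
    intro w; rw [dotProduct_mulVec, ← mulVec_transpose]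
  have hcross : (K *ᵥ u) ⬝ᵥ (D *ᵥ v) = (Bᵀ *ᵥ u) ⬝ᵥ v := by
    rw [dotProduct_mulVec, ← mulVec_transpose, hD, hDK]
  have hself : (K *ᵥ u) ⬝ᵥ (D *ᵥ (K *ᵥ u)) = (Bᵀ *ᵥ u) ⬝ᵥ (K *ᵥ u) := by
    rw [dotProduct_mulVec, ← mulVec_transpose, hD, hDK]
  have hcomm : v ⬝ᵥ (Bᵀ *ᵥ u) = (Bᵀ *ᵥ u) ⬝ᵥ v := dotProduct_comm _ _
  have e1 : (v + K *ᵥ u) ⬝ᵥ (D *ᵥ (v + K *ᵥ u)) =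
      v ⬝ᵥ (D *ᵥ v) + (Bᵀ *ᵥ u) ⬝ᵥ v + (v ⬝ᵥ (Bᵀ *ᵥ u) + (Bᵀ *ᵥ u) ⬝ᵥ (K *ᵥ u)) := by
    rw [mulVec_add, dotProduct_add, add_dotProduct, add_dotProduct, hcross, hself, hDK]
  have e2 : u ⬝ᵥ ((A - B * K) *ᵥ u) = u ⬝ᵥ (A *ᵥ u) - (Bᵀ *ᵥ u) ⬝ᵥ (K *ᵥ u) := by
    rw [sub_mulVec, dotProduct_sub, ← mulVec_mulVec, hBt]
  rw [e1, e2, hBt v, hcomm]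
  ring

lemma dot_blocks {q r : ℕ} (P : Matrix (Fin q ⊕ Fin r) (Fin q ⊕ Fin r) ℝ)
    (u : Fin q → ℝ) (v : Fin r → ℝ) :
    Sum.elim u v ⬝ᵥ (P *ᵥ Sum.elim u v) =
      u ⬝ᵥ (P.toBlocks₁₁ *ᵥ u) + u ⬝ᵥ (P.toBlocks₁₂ *ᵥ v) +
        (v ⬝ᵥ (P.toBlocks₂₁ *ᵥ u) + v ⬝ᵥ (P.toBlocks₂₂ *ᵥ v)) := by
  conv_lhs => rw [← fromBlocks_toBlocks P]
  rw [fromBlocks_mulVec, sumElim_dotProduct_sumElim]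
  simp [dotProduct_add]

lemma qmi_eq {q r : ℕ} (P : Matrix (Fin q ⊕ Fin r) (Fin q ⊕ Fin r) ℝ)
    (Z : Matrix (Fin r) (Fin q) ℝ) :
    qmi P Z = @HMul.hMul _ _ _ (instHMulOfFintypeOfMulOfAddCommMonoid (l := Fin q))
      ((fromRows (1 : Matrix (Fin q) (Fin q) ℝ) Z)ᵀ * P) (fromRows 1 Z) := rfl

lemma qmi_form {q r : ℕ} (P : Matrix (Fin q ⊕ Fin r) (Fin q ⊕ Fin r) ℝ)
    (Z : Matrix (Fin r) (Fin q) ℝ) (u : Fin q → ℝ) :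
    u ⬝ᵥ (qmi P Z *ᵥ u) = Sum.elim u (Z *ᵥ u) ⬝ᵥ (P *ᵥ Sum.elim u (Z *ᵥ u)) := by
  have hF : fromRows (1 : Matrix (Fin q) (Fin q) ℝ) Z *ᵥ u = Sum.elim u (Z *ᵥ u) := by
    rw [fromRows_mulVec, one_mulVec]
  rw [qmi_eq, ← mulVec_mulVec, ← mulVec_mulVec, dotProduct_mulVec, vecMul_transpose, hF]

lemma star_vec {n : ℕ} (u : Fin n → ℝ) : star u = u := by
  funext i; simp

lemma exists_Z {q r : ℕ} (N : Matrix (Fin q ⊕ Fin r) (Fin q ⊕ Fin r) ℝ) (hNs : N.IsSymm)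
    (hN22 : (-N.toBlocks₂₂).PosDef) (hS0 : (schurC N).PosSemidef)
    (u : Fin q → ℝ) (v : Fin r → ℝ)
    (hxN : 0 ≤ Sum.elim u v ⬝ᵥ (N *ᵥ Sum.elim u v)) :
    ∃ Z : Matrix (Fin r) (Fin q) ℝ, Z *ᵥ u = v ∧ (qmi N Z).PosSemidef := by
  have hent : ∀ a b, N a b = N b a := fun a b => (congrFun (congrFun hNs.eq a) b).symm
  have hDT : (N.toBlocks₂₂)ᵀ = N.toBlocks₂₂ := by
    ext i j; exact hent (Sum.inr j) (Sum.inr i)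
  have hCB : N.toBlocks₂₁ = (N.toBlocks₁₂)ᵀ := by
    ext i j; exact hent (Sum.inr i) (Sum.inl j)
  have hDunit : IsUnit (N.toBlocks₂₂).det := by
    have h1 : IsUnit (-N.toBlocks₂₂) := hN22.isUnit
    have h2 : IsUnit (N.toBlocks₂₂) := by
      simpa using h1.neg
    exact (Matrix.isUnit_iff_isUnit_det _).mp h2
  have hK : N.toBlocks₂₂ * ((N.toBlocks₂₂)⁻¹ * (N.toBlocks₁₂)ᵀ) = (N.toBlocks₁₂)ᵀ := by
    rw [← Matrix.mul_assoc, Matrix.mul_nonsing_inv _ hDunit, Matrix.one_mul]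
  have hSpsd : (N.toBlocks₁₁ - N.toBlocks₁₂ * ((N.toBlocks₂₂)⁻¹ * (N.toBlocks₁₂)ᵀ)).PosSemidef := by
    have : schurC N = N.toBlocks₁₁ - N.toBlocks₁₂ * ((N.toBlocks₂₂)⁻¹ * (N.toBlocks₁₂)ᵀ) := by
      rw [schurC, pinv_eq_inv _ hDunit, Matrix.mul_assoc, hCB]
    rwa [this] at hS0
  have key : ∀ (y : Fin q → ℝ) (z : Fin r → ℝ),
      Sum.elim y z ⬝ᵥ (N *ᵥ Sum.elim y z)
        = y ⬝ᵥ ((N.toBlocks₁₁ - N.toBlocks₁₂ * ((N.toBlocks₂₂)⁻¹ * (N.toBlocks₁₂)ᵀ)) *ᵥ y)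
          + (z + ((N.toBlocks₂₂)⁻¹ * (N.toBlocks₁₂)ᵀ) *ᵥ y) ⬝ᵥ
              (N.toBlocks₂₂ *ᵥ (z + ((N.toBlocks₂₂)⁻¹ * (N.toBlocks₁₂)ᵀ) *ᵥ y)) := by
    intro y z
    rw [dot_blocks, hCB]
    exact comp_sq _ _ _ _ hDT hK y z
  set K := (N.toBlocks₂₂)⁻¹ * (N.toBlocks₁₂)ᵀ with hKdef
  set S := N.toBlocks₁₁ - N.toBlocks₁₂ * K with hSdef
  set D := N.toBlocks₂₂ with hDdef
  have hSnn : ∀ y : Fin q → ℝ, 0 ≤ y ⬝ᵥ (S *ᵥ y) := by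
    intro y; have := hSpsd.dotProduct_mulVec_nonneg y; rwa [_root_.star_vec] at this
  have hST : Sᵀ = S := by
    have := hSpsd.1
    rwa [Matrix.IsHermitian, conjTranspose_eq_transpose_of_trivial] at this
  have hDneg : ∀ p : Fin r → ℝ, p ≠ 0 → p ⬝ᵥ (D *ᵥ p) < 0 := by
    intro p hp
    have := hN22.dotProduct_mulVec_pos hp
    rw [_root_.star_vec, neg_mulVec, dotProduct_neg] at this
    linarith
  have hSsymb : ∀ y z : Fin q → ℝ, y ⬝ᵥ (S *ᵥ z) = (S *ᵥ y) ⬝ᵥ z := by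
    intro y z; rw [dotProduct_mulVec, ← mulVec_transpose, hST]
  by_cases hw : v + K *ᵥ u = 0
  · refine ⟨-K, ?_, PosSemidef.of_dotProduct_mulVec_nonneg (qmi_isHermitian hNs _) ?_⟩
    · rw [neg_mulVec]
      exact (eq_neg_of_add_eq_zero_left hw).symm
    · intro y
      rw [_root_.star_vec, qmi_form, key y ((-K) *ᵥ y)]
      have h1 : (-K) *ᵥ y + K *ᵥ y = 0 := by rw [neg_mulVec]; exact neg_add_cancel _
      rw [h1]
      simpa using hSnn y
  · -- main construction
    set w := v + K *ᵥ u with hwdef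
    have hα : 0 < -(w ⬝ᵥ (D *ᵥ w)) := by have := hDneg w hw; linarith
    have hσα : -(w ⬝ᵥ (D *ᵥ w)) ≤ u ⬝ᵥ (S *ᵥ u) := by
      have hk := key u v
      rw [hk] at hxN
      linarith
    have hσ : 0 < u ⬝ᵥ (S *ᵥ u) := lt_of_lt_of_le hα hσα
    set σ := u ⬝ᵥ (S *ᵥ u) with hσdef
    set t := S *ᵥ u with htdef
    have hvv : ∀ y : Fin q → ℝ, vecMulVec w t *ᵥ y = (t ⬝ᵥ y) • w := by
      intro y
      funext i
      simp only [vecMulVec, mulVec, dotProduct, Pi.smul_apply, smul_eq_mul, of_apply]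
      rw [Finset.sum_mul]
      exact Finset.sum_congr rfl fun j _ => by ring
    have hZp : ∀ y : Fin q → ℝ,
        (-K + σ⁻¹ • vecMulVec w t) *ᵥ y + K *ᵥ y = (σ⁻¹ * (t ⬝ᵥ y)) • w := by
      intro y
      rw [add_mulVec, neg_mulVec, smul_mulVec, hvv, smul_smul]
      abel
    refine ⟨-K + σ⁻¹ • vecMulVec w t, ?_, PosSemidef.of_dotProduct_mulVec_nonneg (qmi_isHermitian hNs _) ?_⟩
    · have htu : t ⬝ᵥ u = σ := dotProduct_comm _ _
      have := hZp u
      rw [htu, inv_mul_cancel₀ hσ.ne', one_smul] at this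
      have h2 : (-K + σ⁻¹ • vecMulVec w t) *ᵥ u = w - K *ᵥ u := by
        rw [eq_sub_iff_add_eq]; exact this
      rw [h2, hwdef]
      abel
    · intro y
      rw [_root_.star_vec, qmi_form, key y _, hZp y]
      set c := σ⁻¹ * (t ⬝ᵥ y) with hcdef
      have hq : (c • w) ⬝ᵥ (D *ᵥ (c • w)) = c ^ 2 * (w ⬝ᵥ (D *ᵥ w)) := by
        rw [mulVec_smul, dotProduct_smul, smul_dotProduct]
        simp [smul_eq_mul]; ring
      rw [hq]
      have hCS : (t ⬝ᵥ y) ^ 2 ≤ σ * (y ⬝ᵥ (S *ᵥ y)) := by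
        have h0 := hSnn (y - (σ⁻¹ * (t ⬝ᵥ y)) • u)
        have hys : y ⬝ᵥ (S *ᵥ u) = t ⬝ᵥ y := by
          rw [htdef, dotProduct_comm]
        have huy : u ⬝ᵥ (S *ᵥ y) = t ⬝ᵥ y := by
          rw [hSsymb, htdef]
        have hexp : (y - (σ⁻¹ * (t ⬝ᵥ y)) • u) ⬝ᵥ (S *ᵥ (y - (σ⁻¹ * (t ⬝ᵥ y)) • u)) =
            y ⬝ᵥ (S *ᵥ y) - 2 * (σ⁻¹ * (t ⬝ᵥ y)) * (t ⬝ᵥ y)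
              + (σ⁻¹ * (t ⬝ᵥ y)) ^ 2 * σ := by
          rw [mulVec_sub, mulVec_smul, dotProduct_sub, sub_dotProduct, sub_dotProduct,
            dotProduct_smul, smul_dotProduct, smul_dotProduct, dotProduct_smul,
            hys, huy]
          simp only [smul_eq_mul, hσdef]
          ring
        rw [hexp] at h0
        have hfs : y ⬝ᵥ (S *ᵥ y) - 2 * (σ⁻¹ * (t ⬝ᵥ y)) * (t ⬝ᵥ y)
            + (σ⁻¹ * (t ⬝ᵥ y)) ^ 2 * σ = y ⬝ᵥ (S *ᵥ y) - (t ⬝ᵥ y) ^ 2 / σ := by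
          field_simp
          ring
        rw [hfs] at h0
        have h3 : σ * ((t ⬝ᵥ y) ^ 2 / σ) = (t ⬝ᵥ y) ^ 2 := by
          field_simp
        nlinarith [mul_nonneg hσ.le h0, h3]
      have h1 : c ^ 2 * (-(w ⬝ᵥ (D *ᵥ w))) ≤ c ^ 2 * σ :=
        mul_le_mul_of_nonneg_left hσα (sq_nonneg c)
      have h2 : c ^ 2 * σ ≤ y ⬝ᵥ (S *ᵥ y) := by
        have hcs : c ^ 2 * σ * σ = (t ⬝ᵥ y) ^ 2 := by
          rw [hcdef]
          field_simp
        nlinarith [hCS, hσ]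
      linarith

/-- For symmetric `M` and `N ∈ Π_{q,r}` with `N₂₂ ≺ 0`,
`Z_r(N) ⊆ Z_r⁺(M)` iff `xᵀMx > 0` for all nonzero `x` with `xᵀNx ≥ 0`. -/
theorem stmt_12 {q r : ℕ} (M N : Matrix (Fin q ⊕ Fin r) (Fin q ⊕ Fin r) ℝ)
    (hM : M.IsSymm) (hN : memPi N) (hN22 : (-N.toBlocks₂₂).PosDef) :
    ZrSet N ⊆ ZrPlusSet M ↔
      ∀ x : Fin q ⊕ Fin r → ℝ, x ≠ 0 → 0 ≤ x ⬝ᵥ (N *ᵥ x) → 0 < x ⬝ᵥ (M *ᵥ x) := by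
  obtain ⟨hNs, hN22psd, hS0, hker⟩ := hN
  constructor
  · intro hsub x hx hxN
    set u := x ∘ Sum.inl with hu'
    set v := x ∘ Sum.inr with hv'
    have hxe : x = Sum.elim u v := by funext a; cases a <;> rfl
    obtain ⟨Z, hZu, hZm⟩ := exists_Z N hNs hN22 hS0 u v (by rwa [hxe] at hxN)
    have hu : u ≠ 0 := by
      intro h0
      apply hx
      have hv : v = 0 := by rw [← hZu, h0, mulVec_zero]
      rw [hxe, h0, hv]
      funext a; cases a <;> rfl
    have hPD : (qmi M Z).PosDef := hsub hZm
    have h2 := hPD.dotProduct_mulVec_pos hu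
    rwa [_root_.star_vec, qmi_form, hZu, ← hxe] at h2
  · intro hquad Z hZ
    refine PosDef.of_dotProduct_mulVec_pos (qmi_isHermitian hM Z) (fun u hu => ?_)
    rw [_root_.star_vec, qmi_form]
    apply hquad
    · intro h
      apply hu
      funext i
      exact congrFun h (Sum.inl i)
    · have h3 := hZ.dotProduct_mulVec_nonneg u
      rwa [_root_.star_vec, qmi_form] at h3
end

section
/- (Matrix S-lemma.) Let M, N ∈ S^{q+r}. If there exists a real α ≥ 0 such that M − αN is positive semidefinite, then Z_r(N) ⊆ Z_r(M). Conversely, if in addition N ∈ Π_{q,r} and N has at least one positive eigenvalue, then Z_r(N) ⊆ Z_r(M) if and only if there exists a real α ≥ 0 such that M − αN is positive semidefinite. -/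
open Matrix
open scoped Classical

namespace SLem

variable {n : ℕ}

def Penrose (A : Matrix (Fin n) (Fin n) ℝ) (B : Matrix (Fin n) (Fin n) ℝ) : Prop :=
  A * B * A = A ∧ B * A * B = B ∧ (A * B)ᵀ = A * B ∧ (B * A)ᵀ = B * A

lemma exists_penrose {A : Matrix (Fin n) (Fin n) ℝ} (hA : Aᵀ = A) :
    ∃ B, Penrose A B := by
  have hH : A.IsHermitian := by
    rw [Matrix.IsHermitian, conjTranspose_eq_transpose_of_trivial, hA]
  set V : Matrix (Fin n) (Fin n) ℝ := (hH.eigenvectorUnitary : Matrix (Fin n) (Fin n) ℝ) with hV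
  set d : Fin n → ℝ := hH.eigenvalues with hd
  have hVV : V * star V = 1 := (Matrix.mem_unitaryGroup_iff).mp hH.eigenvectorUnitary.2
  have hVV' : star V * V = 1 := (Matrix.mem_unitaryGroup_iff').mp hH.eigenvectorUnitary.2
  have hspec : A = V * diagonal d * star V := by
    have := hH.spectral_theorem
    simpa using this
  refine ⟨V * diagonal (fun i => (d i)⁻¹) * star V, ?_, ?_, ?_, ?_⟩
  · rw [hspec]
    calc (V * diagonal d * star V) * (V * diagonal (fun i => (d i)⁻¹) * star V) *
        (V * diagonal d * star V)
        = V * (diagonal d * (star V * V) * diagonal (fun i => (d i)⁻¹) * (star V * V)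
            * diagonal d) * star V := by noncomm_ring
      _ = V * (diagonal d * diagonal (fun i => (d i)⁻¹) * diagonal d) * star V := by
            rw [hVV']; noncomm_ring
      _ = V * diagonal d * star V := by
            rw [diagonal_mul_diagonal, diagonal_mul_diagonal]
            congr 2
            ext i
            rcases eq_or_ne (d i) 0 with h | h <;> field_simp [h]
  · rw [hspec]
    calc (V * diagonal (fun i => (d i)⁻¹) * star V) * (V * diagonal d * star V) *
        (V * diagonal (fun i => (d i)⁻¹) * star V)
        = V * (diagonal (fun i => (d i)⁻¹) * (star V * V) * diagonal d * (star V * V)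
            * diagonal (fun i => (d i)⁻¹)) * star V := by noncomm_ring
      _ = V * (diagonal (fun i => (d i)⁻¹) * diagonal d * diagonal (fun i => (d i)⁻¹)) * star V
          := by rw [hVV']; noncomm_ring
      _ = V * diagonal (fun i => (d i)⁻¹) * star V := by
            rw [diagonal_mul_diagonal, diagonal_mul_diagonal]
            congr 2
            ext i
            rcases eq_or_ne (d i) 0 with h | h <;> field_simp [h]
  · rw [hspec]
    have : (V * diagonal d * star V) * (V * diagonal (fun i => (d i)⁻¹) * star V)
        = V * diagonal (fun i => d i * (d i)⁻¹) * star V := by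
      rw [← diagonal_mul_diagonal]
      calc (V * diagonal d * star V) * (V * diagonal (fun i => (d i)⁻¹) * star V)
          = V * (diagonal d * (star V * V) * diagonal (fun i => (d i)⁻¹)) * star V := by
            noncomm_ring
        _ = _ := by rw [hVV']; noncomm_ring
    rw [this]
    have hstar : star V = Vᵀ := by
      rw [← conjTranspose_eq_transpose_of_trivial]; rfl
    rw [hstar, transpose_mul, transpose_mul, transpose_transpose, diagonal_transpose, mul_assoc]
  · rw [hspec]
    have : (V * diagonal (fun i => (d i)⁻¹) * star V) * (V * diagonal d * star V)
        = V * diagonal (fun i => (d i)⁻¹ * d i) * star V := by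
      rw [← diagonal_mul_diagonal]
      calc (V * diagonal (fun i => (d i)⁻¹) * star V) * (V * diagonal d * star V)
          = V * (diagonal (fun i => (d i)⁻¹) * (star V * V) * diagonal d) * star V := by
            noncomm_ring
        _ = _ := by rw [hVV']; noncomm_ring
    rw [this]
    have hstar : star V = Vᵀ := by
      rw [← conjTranspose_eq_transpose_of_trivial]; rfl
    rw [hstar, transpose_mul, transpose_mul, transpose_transpose, diagonal_transpose, mul_assoc]

lemma penrose_unique {A B C : Matrix (Fin n) (Fin n) ℝ}
    (hB : Penrose A B) (hC : Penrose A C) : B = C := by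
  obtain ⟨hB1, hB2, hB3, hB4⟩ := hB
  obtain ⟨hC1, hC2, hC3, hC4⟩ := hC
  have hAB : A * B = A * C := by
    calc A * B = (A * B)ᵀ := hB3.symm
      _ = ((A * C * A) * B)ᵀ := by rw [hC1]
      _ = (A * B)ᵀ * (A * C)ᵀ := by simp [transpose_mul, Matrix.mul_assoc]
      _ = (A * B) * (A * C) := by rw [hB3, hC3]
      _ = (A * B * A) * C := by noncomm_ring
      _ = A * C := by rw [hB1]
  have hBA : B * A = C * A := by
    calc B * A = (B * A)ᵀ := hB4.symm
      _ = (B * (A * C * A))ᵀ := by rw [hC1]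
      _ = (C * A)ᵀ * (B * A)ᵀ := by simp [transpose_mul, Matrix.mul_assoc]
      _ = (C * A) * (B * A) := by rw [hB4, hC4]
      _ = C * (A * B * A) := by noncomm_ring
      _ = C * A := by rw [hB1]
  calc B = B * A * B := hB2.symm
    _ = B * (A * C) := by rw [← hAB]; noncomm_ring
    _ = (B * A) * C := by noncomm_ring
    _ = (C * A) * C := by rw [hBA]
    _ = C := hC2

lemma pinv_penrose {A : Matrix (Fin n) (Fin n) ℝ} (hA : Aᵀ = A) : Penrose A (pinv A) := by
  have h : ∃ B : Matrix (Fin n) (Fin n) ℝ,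
      A * B * A = A ∧ B * A * B = B ∧ (A * B)ᵀ = A * B ∧ (B * A)ᵀ = B * A := exists_penrose hA
  rw [pinv, dif_pos h]
  exact h.choose_spec

lemma pinv_symm {A : Matrix (Fin n) (Fin n) ℝ} (hA : Aᵀ = A) : (pinv A)ᵀ = pinv A := by
  obtain ⟨h1, h2, h3, h4⟩ := pinv_penrose hA
  have hT : Penrose A (pinv A)ᵀ := by
    refine ⟨?_, ?_, ?_, ?_⟩
    · calc A * (pinv A)ᵀ * A = (A * pinv A * A)ᵀ := by
            simp [transpose_mul, hA, Matrix.mul_assoc]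
        _ = A := by rw [h1, hA]
    · calc (pinv A)ᵀ * A * (pinv A)ᵀ = (pinv A * A * pinv A)ᵀ := by
            simp [transpose_mul, hA, Matrix.mul_assoc]
        _ = (pinv A)ᵀ := by rw [h2]
    · calc (A * (pinv A)ᵀ)ᵀ = pinv A * Aᵀ := by rw [transpose_mul, transpose_transpose]
        _ = pinv A * A := by rw [hA]
        _ = (pinv A * A)ᵀ := h4.symm
        _ = Aᵀ * (pinv A)ᵀ := by rw [transpose_mul]
        _ = A * (pinv A)ᵀ := by rw [hA]
    · calc ((pinv A)ᵀ * A)ᵀ = Aᵀ * pinv A := by rw [transpose_mul, transpose_transpose]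
        _ = A * pinv A := by rw [hA]
        _ = (A * pinv A)ᵀ := h3.symm
        _ = (pinv A)ᵀ * Aᵀ := by rw [transpose_mul]
        _ = (pinv A)ᵀ * A := by rw [hA]
  exact penrose_unique hT (pinv_penrose hA)

lemma pinv_comm {A : Matrix (Fin n) (Fin n) ℝ} (hA : Aᵀ = A) : A * pinv A = pinv A * A := by
  obtain ⟨h1, h2, h3, h4⟩ := pinv_penrose hA
  calc A * pinv A = (A * pinv A)ᵀ := h3.symm
    _ = (pinv A)ᵀ * Aᵀ := by rw [transpose_mul]
    _ = pinv A * A := by rw [pinv_symm hA, hA]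

/-- If `c ⊥ ker A` for symmetric `A`, then `A (A⁺ c) = c`. -/
lemma pinv_solve {A : Matrix (Fin n) (Fin n) ℝ} (hA : Aᵀ = A) {c : Fin n → ℝ}
    (hc : ∀ u, A *ᵥ u = 0 → c ⬝ᵥ u = 0) : A *ᵥ (pinv A *ᵥ c) = c := by
  obtain ⟨h1, h2, h3, h4⟩ := pinv_penrose hA
  set e : Fin n → ℝ := c - A *ᵥ (pinv A *ᵥ c) with he
  have hAAP : A * (A * pinv A) = A := by
    rw [pinv_comm hA, ← Matrix.mul_assoc, h1]
  have hAe : A *ᵥ e = 0 := by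
    rw [he, mulVec_sub, mulVec_mulVec, mulVec_mulVec, Matrix.mul_assoc, hAAP, sub_self]
  have hce : c ⬝ᵥ e = 0 := hc e hAe
  have h2e : (A *ᵥ (pinv A *ᵥ c)) ⬝ᵥ e = 0 := by
    rw [mulVec_mulVec, dotProduct_comm, dotProduct_mulVec, ← mulVec_transpose, h3,
      pinv_comm hA, ← mulVec_mulVec, hAe, mulVec_zero, zero_dotProduct]
  have hee : e ⬝ᵥ e = 0 := by
    have : e ⬝ᵥ e = c ⬝ᵥ e - (A *ᵥ (pinv A *ᵥ c)) ⬝ᵥ e := by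
      rw [he, sub_dotProduct]
    rw [this, hce, h2e, sub_zero]
  have := dotProduct_self_eq_zero.mp hee
  rw [he] at this
  exact (sub_eq_zero.mp this).symm

end SLem
namespace SLem

/-- Quadratic form of a matrix. -/
def qf {ι : Type*} [Fintype ι] (A : Matrix ι ι ℝ) (x : ι → ℝ) : ℝ := x ⬝ᵥ (A *ᵥ x)

variable {ι : Type*} [Fintype ι]

@[simp] lemma qf_zero (A : Matrix ι ι ℝ) : qf A 0 = 0 := by simp [qf]

lemma qf_smul (A : Matrix ι ι ℝ) (c : ℝ) (x : ι → ℝ) : qf A (c • x) = c ^ 2 * qf A x := by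
  simp [qf, mulVec_smul, dotProduct_smul, smul_dotProduct, smul_eq_mul]
  ring

lemma qf_smul_add (A : Matrix ι ι ℝ) (a b : ℝ) (x y : ι → ℝ) :
    qf A (a • x + b • y) = a ^ 2 * qf A x + a * b * (x ⬝ᵥ (A *ᵥ y) + y ⬝ᵥ (A *ᵥ x))
      + b ^ 2 * qf A y := by
  simp [qf, mulVec_add, mulVec_smul, dotProduct_add, add_dotProduct, dotProduct_smul,
    smul_dotProduct, smul_eq_mul]
  ring

lemma qf_add (A : Matrix ι ι ℝ) (x y : ι → ℝ) :
    qf A (x + y) = qf A x + (x ⬝ᵥ (A *ᵥ y) + y ⬝ᵥ (A *ᵥ x)) + qf A y := by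
  have := qf_smul_add A 1 1 x y
  simpa using this

lemma qf_sub_smul (M N : Matrix ι ι ℝ) (α : ℝ) (x : ι → ℝ) :
    qf (M - α • N) x = qf M x - α * qf N x := by
  simp [qf, sub_mulVec, smul_mulVec, dotProduct_sub, dotProduct_smul, smul_eq_mul]

lemma qf_nonneg {A : Matrix ι ι ℝ} (hA : A.PosSemidef) (x : ι → ℝ) : 0 ≤ qf A x := by
  simpa [qf] using hA.dotProduct_mulVec_nonneg x

lemma posSemidef_of_qf {A : Matrix ι ι ℝ} [DecidableEq ι] (hsym : Aᵀ = A)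
    (h : ∀ x, 0 ≤ qf A x) : A.PosSemidef := by
  refine PosSemidef.of_dotProduct_mulVec_nonneg ?_ fun x => by simpa [qf] using h x
  rw [Matrix.IsHermitian, conjTranspose_eq_transpose_of_trivial, hsym]

/-- Cauchy–Schwarz for a PSD matrix. -/
lemma psd_cauchy_schwarz {A : Matrix ι ι ℝ} (hA : A.PosSemidef) (hsym : Aᵀ = A) (x v : ι → ℝ) :
    (x ⬝ᵥ (A *ᵥ v)) ^ 2 ≤ qf A x * qf A v := by
  have key : ∀ t : ℝ, 0 ≤ qf A v * (t * t) + (2 * (x ⬝ᵥ (A *ᵥ v))) * t + qf A x := by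
    intro t
    have h := qf_nonneg hA (x + t • v)
    have hexp := qf_smul_add A 1 t x v
    simp only [one_smul, one_pow, one_mul] at hexp
    have hsymm : v ⬝ᵥ (A *ᵥ x) = x ⬝ᵥ (A *ᵥ v) := by
      rw [dotProduct_comm, dotProduct_mulVec, ← mulVec_transpose, hsym]
    rw [hexp, hsymm] at h
    nlinarith [h]
  have hd : discrim (qf A v) (2 * (x ⬝ᵥ (A *ᵥ v))) (qf A x) ≤ 0 := discrim_le_zero key
  rw [discrim] at hd
  nlinarith [hd]

lemma eq_of_mulVec_eq {m k : ℕ} {E F : Matrix (Fin m) (Fin k) ℝ}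
    (h : ∀ v, E *ᵥ v = F *ᵥ v) : E = F := by
  ext i j
  have := congrFun (h (Pi.single j 1)) i
  simpa [mulVec_single] using this

lemma vecMulVec_mulVec {m k : ℕ} (w : Fin m → ℝ) (s : Fin k → ℝ) (v : Fin k → ℝ) :
    vecMulVec w s *ᵥ v = (s ⬝ᵥ v) • w := by
  ext i
  simp only [vecMulVec_apply, mulVec, dotProduct, Pi.smul_apply, smul_eq_mul]
  rw [Finset.sum_mul]
  apply Finset.sum_congr rfl
  intro j _
  ring

end SLem
namespace SLem

variable {q r : ℕ}

lemma qmi_def (P : Matrix (Fin q ⊕ Fin r) (Fin q ⊕ Fin r) ℝ) (Z : Matrix (Fin r) (Fin q) ℝ) :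
    qmi P Z = ((fromRows (1 : Matrix (Fin q) (Fin q) ℝ) Z)ᵀ : Matrix (Fin q) (Fin q ⊕ Fin r) ℝ)
      * P * (fromRows (1 : Matrix (Fin q) (Fin q) ℝ) Z : Matrix (Fin q ⊕ Fin r) (Fin q) ℝ) := rfl

lemma qmi_eq (P : Matrix (Fin q ⊕ Fin r) (Fin q ⊕ Fin r) ℝ) (Z : Matrix (Fin r) (Fin q) ℝ) :
    qmi P Z = P.toBlocks₁₁ + P.toBlocks₁₂ * Z + Zᵀ * P.toBlocks₂₁ + Zᵀ * P.toBlocks₂₂ * Z := by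
  conv_lhs => rw [qmi_def, ← fromBlocks_toBlocks P, transpose_fromRows, fromCols_mul_fromBlocks,
    fromCols_mul_fromRows]
  simp only [transpose_one, Matrix.one_mul, Matrix.mul_one]
  rw [Matrix.add_mul]
  abel

lemma qmi_transpose {P : Matrix (Fin q ⊕ Fin r) (Fin q ⊕ Fin r) ℝ} (hP : P.IsSymm)
    (Z : Matrix (Fin r) (Fin q) ℝ) : (qmi P Z)ᵀ = qmi P Z := by
  rw [qmi_def, transpose_mul, transpose_mul, transpose_transpose, hP.eq, Matrix.mul_assoc]

lemma qmi_qf (P : Matrix (Fin q ⊕ Fin r) (Fin q ⊕ Fin r) ℝ) (Z : Matrix (Fin r) (Fin q) ℝ)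
    (x : Fin q → ℝ) : x ⬝ᵥ (qmi P Z *ᵥ x) = qf P (Sum.elim x (Z *ᵥ x)) := by
  rw [qmi_def, ← mulVec_mulVec, ← mulVec_mulVec, dotProduct_mulVec, vecMul_transpose,
    fromRows_mulVec, one_mulVec, qf, dotProduct_mulVec]

lemma qf_blocks (P : Matrix (Fin q ⊕ Fin r) (Fin q ⊕ Fin r) ℝ) (x : Fin q → ℝ) (z : Fin r → ℝ) :
    qf P (Sum.elim x z) = x ⬝ᵥ (P.toBlocks₁₁ *ᵥ x) + x ⬝ᵥ (P.toBlocks₁₂ *ᵥ z)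
      + z ⬝ᵥ (P.toBlocks₂₁ *ᵥ x) + z ⬝ᵥ (P.toBlocks₂₂ *ᵥ z) := by
  conv_lhs => rw [qf, ← fromBlocks_toBlocks P]
  rw [fromBlocks_mulVec, sumElim_dotProduct_sumElim, dotProduct_add, dotProduct_add,
    Sum.elim_comp_inl, Sum.elim_comp_inr]
  ring

section CoS

variable {N : Matrix (Fin q ⊕ Fin r) (Fin q ⊕ Fin r) ℝ} (hNs : N.IsSymm)
    (hker : ∀ x : Fin r → ℝ, N.toBlocks₂₂ *ᵥ x = 0 → N.toBlocks₁₂ *ᵥ x = 0)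

include hNs

lemma N22_symm : (N.toBlocks₂₂)ᵀ = N.toBlocks₂₂ := by
  ext i j
  simp only [Matrix.transpose_apply, Matrix.toBlocks₂₂, Matrix.of_apply]
  exact hNs.apply _ _

lemma N21_transpose : (N.toBlocks₂₁)ᵀ = N.toBlocks₁₂ := by
  ext i j
  simp only [Matrix.transpose_apply, Matrix.toBlocks₂₁, Matrix.toBlocks₁₂, Matrix.of_apply]
  exact hNs.apply _ _

include hker

lemma N22_mul_K : N.toBlocks₂₂ * (pinv N.toBlocks₂₂ * N.toBlocks₂₁) = N.toBlocks₂₁ := by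
  apply eq_of_mulVec_eq
  intro v
  rw [← mulVec_mulVec, ← mulVec_mulVec]
  apply pinv_solve (N22_symm hNs)
  intro u hu
  rw [dotProduct_comm, dotProduct_mulVec, ← mulVec_transpose, N21_transpose hNs,
    hker u hu, zero_dotProduct]

lemma Kt_mul_N22 : (pinv N.toBlocks₂₂ * N.toBlocks₂₁)ᵀ * N.toBlocks₂₂ = N.toBlocks₁₂ := by
  have h := congrArg Matrix.transpose (N22_mul_K hNs hker)
  rw [transpose_mul, N22_symm hNs, N21_transpose hNs] at h
  exact h

lemma cos_identity (Z : Matrix (Fin r) (Fin q) ℝ) :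
    qmi N Z = schurC N
      + (Z + pinv N.toBlocks₂₂ * N.toBlocks₂₁)ᵀ * N.toBlocks₂₂
        * (Z + pinv N.toBlocks₂₂ * N.toBlocks₂₁) := by
  have h1 : N.toBlocks₂₂ * (pinv N.toBlocks₂₂ * N.toBlocks₂₁) = N.toBlocks₂₁ :=
    N22_mul_K hNs hker
  have h2 : (pinv N.toBlocks₂₂ * N.toBlocks₂₁)ᵀ * N.toBlocks₂₂ = N.toBlocks₁₂ :=
    Kt_mul_N22 hNs hker
  have hKt : (pinv N.toBlocks₂₂ * N.toBlocks₂₁)ᵀ = N.toBlocks₁₂ * pinv N.toBlocks₂₂ := by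
    rw [transpose_mul, pinv_symm (N22_symm hNs), N21_transpose hNs]
  have expand : (Z + pinv N.toBlocks₂₂ * N.toBlocks₂₁)ᵀ * N.toBlocks₂₂
        * (Z + pinv N.toBlocks₂₂ * N.toBlocks₂₁)
      = Zᵀ * N.toBlocks₂₂ * Z + Zᵀ * N.toBlocks₂₂ * (pinv N.toBlocks₂₂ * N.toBlocks₂₁)
        + ((pinv N.toBlocks₂₂ * N.toBlocks₂₁)ᵀ * N.toBlocks₂₂ * Z
        + (pinv N.toBlocks₂₂ * N.toBlocks₂₁)ᵀ * N.toBlocks₂₂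
            * (pinv N.toBlocks₂₂ * N.toBlocks₂₁)) := by
    rw [transpose_add, Matrix.add_mul, Matrix.add_mul, Matrix.mul_add, Matrix.mul_add]
  rw [qmi_eq, schurC, expand,
    show Zᵀ * N.toBlocks₂₂ * (pinv N.toBlocks₂₂ * N.toBlocks₂₁) = Zᵀ * N.toBlocks₂₁ from by
      rw [Matrix.mul_assoc, h1], h2,
    Matrix.mul_assoc N.toBlocks₁₂ (pinv N.toBlocks₂₂) N.toBlocks₂₁]
  abel

end CoS

end SLem
namespace SLem

section Dines

variable {ι : Type*} [Fintype ι]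

lemma dines_add (A B : Matrix ι ι ℝ) (x y : ι → ℝ) :
    ∃ z : ι → ℝ, qf A z = qf A x + qf A y ∧ qf B z = qf B x + qf B y := by
  set pa := qf A x + qf A y with hpa
  set pb := qf B x + qf B y with hpb
  set βa := x ⬝ᵥ (A *ᵥ y) + y ⬝ᵥ (A *ᵥ x) with hβa
  set βb := x ⬝ᵥ (B *ᵥ y) + y ⬝ᵥ (B *ᵥ x) with hβb
  set FA : ℝ → ℝ := fun t =>
    Real.cos t ^ 2 * qf A x + Real.cos t * Real.sin t * βa + Real.sin t ^ 2 * qf A y with hFA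
  set FB : ℝ → ℝ := fun t =>
    Real.cos t ^ 2 * qf B x + Real.cos t * Real.sin t * βb + Real.sin t ^ 2 * qf B y with hFB
  have hFAu : ∀ t, qf A (Real.cos t • x + Real.sin t • y) = FA t := by
    intro t; rw [qf_smul_add, hFA]
  have hFBu : ∀ t, qf B (Real.cos t • x + Real.sin t • y) = FB t := by
    intro t; rw [qf_smul_add, hFB]
  have hFAv : ∀ t, qf A ((-Real.sin t) • x + Real.cos t • y) = pa - FA t := by
    intro t; rw [qf_smul_add, hFA, hpa]
    simp only
    linear_combination (qf A x + qf A y) * (Real.sin_sq_add_cos_sq t)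
  have hFBv : ∀ t, qf B ((-Real.sin t) • x + Real.cos t • y) = pb - FB t := by
    intro t; rw [qf_smul_add, hFB, hpb]
    simp only
    linear_combination (qf B x + qf B y) * (Real.sin_sq_add_cos_sq t)
  set h : ℝ → ℝ := fun t => FA t * pb - FB t * pa with hh
  have hc : Continuous h := by
    rw [hh, hFA, hFB]
    fun_prop
  have hA0 : FA 0 = qf A x := by rw [hFA]; simp
  have hB0 : FB 0 = qf B x := by rw [hFB]; simp
  have hApi : FA (Real.pi / 2) = qf A y := by rw [hFA]; simp
  have hBpi : FB (Real.pi / 2) = qf B y := by rw [hFB]; simp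
  have hsum : h (Real.pi / 2) = -(h 0) := by
    rw [hh]
    simp only
    rw [hA0, hB0, hApi, hBpi, hpa, hpb]
    ring
  have hpi2 : (0:ℝ) ≤ Real.pi / 2 := by positivity
  have hivt : ∃ t, h t = 0 := by
    rcases le_total (h 0) 0 with h0 | h0
    · have : (0:ℝ) ∈ Set.Icc (h 0) (h (Real.pi/2)) := by
        constructor
        · exact h0
        · rw [hsum]; linarith
      obtain ⟨t, _, ht⟩ := intermediate_value_Icc hpi2 hc.continuousOn this
      exact ⟨t, ht⟩
    · have : (0:ℝ) ∈ Set.Icc (h (Real.pi/2)) (h 0) := by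
        constructor
        · rw [hsum]; linarith
        · exact h0
      obtain ⟨t, _, ht⟩ := intermediate_value_Icc' hpi2 hc.continuousOn this
      exact ⟨t, ht⟩
  obtain ⟨t, ht⟩ := hivt
  rw [hh] at ht
  simp only at ht
  have ht' : FA t * pb = FB t * pa := by linarith
  by_cases hp : pa = 0 ∧ pb = 0
  · exact ⟨0, by simp [hp.1, hp.2]⟩
  · have hex : ∃ l : ℝ, FA t = l * pa ∧ FB t = l * pb := by
      by_cases hpa0 : pa = 0
      · have hpb0 : pb ≠ 0 := fun hc => hp ⟨hpa0, hc⟩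
        refine ⟨FB t / pb, ?_, by field_simp⟩
        rw [hpa0, mul_zero]
        have : FA t * pb = 0 := by rw [ht', hpa0, mul_zero]
        exact (mul_eq_zero.mp this).resolve_right hpb0
      · refine ⟨FA t / pa, by field_simp, ?_⟩
        field_simp
        linarith [ht']
    obtain ⟨l, hla, hlb⟩ := hex
    rcases lt_or_ge 0 l with hl | hl
    · refine ⟨(Real.sqrt l)⁻¹ • (Real.cos t • x + Real.sin t • y), ?_, ?_⟩
      · rw [qf_smul, hFAu, hla, inv_pow, Real.sq_sqrt hl.le]
        field_simp
      · rw [qf_smul, hFBu, hlb, inv_pow, Real.sq_sqrt hl.le]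
        field_simp
    · have h1l : 0 < 1 - l := by linarith
      refine ⟨(Real.sqrt (1 - l))⁻¹ • ((-Real.sin t) • x + Real.cos t • y), ?_, ?_⟩
      · rw [qf_smul, hFAv, hla, inv_pow, Real.sq_sqrt h1l.le]
        field_simp
      · rw [qf_smul, hFBv, hlb, inv_pow, Real.sq_sqrt h1l.le]
        field_simp

lemma dines_smul (A B : Matrix ι ι ℝ) (c : ℝ) (hc : 0 ≤ c) (x : ι → ℝ) :
    ∃ z : ι → ℝ, qf A z = c * qf A x ∧ qf B z = c * qf B x :=
  ⟨Real.sqrt c • x, by rw [qf_smul, Real.sq_sqrt hc], by rw [qf_smul, Real.sq_sqrt hc]⟩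

lemma dines_convex (A B : Matrix ι ι ℝ) :
    Convex ℝ {p : ℝ × ℝ | ∃ ξ : ι → ℝ, p = (qf A ξ, qf B ξ)} := by
  rintro p ⟨ξ, hξ⟩ p' ⟨η, hη⟩ a b ha hb _
  obtain ⟨z1, hz1a, hz1b⟩ := dines_smul A B a ha ξ
  obtain ⟨z2, hz2a, hz2b⟩ := dines_smul A B b hb η
  obtain ⟨z, hza, hzb⟩ := dines_add A B z1 z2
  refine ⟨z, ?_⟩
  rw [hξ, hη]
  ext
  · simp [hza, hz1a, hz2a]
  · simp [hzb, hz1b, hz2b]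

/-- The homogeneous S-lemma. -/
lemma s_lemma {A B : Matrix ι ι ℝ}
    (himp : ∀ ξ : ι → ℝ, 0 ≤ qf A ξ → 0 ≤ qf B ξ) (hslater : ∃ ξ, 0 < qf A ξ) :
    ∃ α : ℝ, 0 ≤ α ∧ ∀ ξ, 0 ≤ qf B ξ - α * qf A ξ := by
  set D := {p : ℝ × ℝ | ∃ ξ : ι → ℝ, p = (qf A ξ, qf B ξ)} with hD
  set C := {p : ℝ × ℝ | 0 < p.1 ∧ p.2 < 0} with hC
  have hCconv : Convex ℝ C := by
    have h1 : Convex ℝ {p : ℝ × ℝ | 0 < p.1} := convex_halfSpace_gt (LinearMap.isLinear (LinearMap.fst ℝ ℝ ℝ)) 0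
    have h2 : Convex ℝ {p : ℝ × ℝ | p.2 < 0} := convex_halfSpace_lt (LinearMap.isLinear (LinearMap.snd ℝ ℝ ℝ)) 0
    exact h1.inter h2
  have hCopen : IsOpen C := by
    have h1 : IsOpen {p : ℝ × ℝ | 0 < p.1} := isOpen_lt continuous_const continuous_fst
    have h2 : IsOpen {p : ℝ × ℝ | p.2 < 0} := isOpen_lt continuous_snd continuous_const
    exact h1.inter h2
  have hdisj : Disjoint C D := by
    rw [Set.disjoint_left]
    rintro p ⟨hp1, hp2⟩ ⟨ξ, hξ⟩
    rw [hξ] at hp1 hp2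
    exact absurd (himp ξ (le_of_lt hp1)) (not_le.mpr hp2)
  obtain ⟨f, u₀, hCf, hDf⟩ := geometric_hahn_banach_open hCconv hCopen (dines_convex A B) hdisj
  set a := f (1, 0) with hfa
  set b := f (0, 1) with hfb
  have hf : ∀ p : ℝ × ℝ, f p = p.1 * a + p.2 * b := by
    intro p
    have hdecomp : p = p.1 • ((1:ℝ), (0:ℝ)) + p.2 • ((0:ℝ), (1:ℝ)) := by
      ext <;> simp
    have h2 : f (p.1 • ((1:ℝ), (0:ℝ)) + p.2 • ((0:ℝ), (1:ℝ))) = p.1 * a + p.2 * b := by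
      rw [f.map_add, f.map_smul, f.map_smul, smul_eq_mul, smul_eq_mul, hfa, hfb]
    rw [← hdecomp] at h2
    exact h2
  have hmemD : ∀ ξ : ι → ℝ, (qf A ξ, qf B ξ) ∈ D := fun ξ => ⟨ξ, rfl⟩
  have hu0 : u₀ ≤ 0 := by
    have := hDf _ (hmemD 0)
    simpa [hf] using this
  have hb : 0 ≤ b := by
    by_contra hb
    push_neg at hb
    have hmem : ((1:ℝ), (1 + |a|)/b) ∈ C := by
      constructor
      · norm_num
      · show (1 + |a|)/b < 0
        apply div_neg_of_pos_of_neg (by positivity) hb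
    have h2 := hCf _ hmem
    rw [hf] at h2
    simp only at h2
    have hval : (1:ℝ) * a + ((1 + |a|)/b) * b = a + (1 + |a|) := by
      rw [one_mul, div_mul_cancel₀ _ (ne_of_lt hb)]
    rw [hval] at h2
    have h3 : 0 < a + (1 + |a|) := by
      have := abs_nonneg a
      have := neg_abs_le a
      linarith
    linarith
  have ha : a ≤ 0 := by
    by_contra ha
    push_neg at ha
    have hmem : ((2*b + 1)/a, (-1:ℝ)) ∈ C := by
      constructor
      · show 0 < (2*b+1)/a
        positivity
      · norm_num
    have h2 := hCf _ hmem
    rw [hf] at h2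
    simp only at h2
    have hval : ((2*b+1)/a) * a + (-1:ℝ) * b = b + 1 := by
      rw [div_mul_cancel₀ _ (ne_of_gt ha)]; ring
    rw [hval] at h2
    linarith
  have hcone : ∀ ξ : ι → ℝ, 0 ≤ a * qf A ξ + b * qf B ξ := by
    intro ξ
    by_contra hcon
    push_neg at hcon
    set c := a * qf A ξ + b * qf B ξ with hc2
    have hneg : c < 0 := hcon
    set t := (u₀ - 1)/c with hte
    have htpos : 0 ≤ t := by
      apply le_of_lt
      apply div_pos_of_neg_of_neg _ hneg
      linarith
    obtain ⟨z, hza, hzb⟩ := dines_smul A B t htpos ξ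
    have := hDf _ (hmemD z)
    rw [hf] at this
    simp only at this
    rw [hza, hzb] at this
    have hval : (t * qf A ξ) * a + (t * qf B ξ) * b = t * c := by rw [hc2]; ring
    rw [hval, hte] at this
    have : u₀ ≤ u₀ - 1 := by
      rwa [div_mul_cancel₀] at this
      exact ne_of_lt hneg
    linarith
  rcases eq_or_lt_of_le hb with hb0 | hbpos
  · exfalso
    have ha0 : a ≠ 0 := by
      intro ha0
      have h2 := hCf (1, -1) (by constructor <;> norm_num)
      rw [hf, ha0, ← hb0] at h2
      norm_num at h2
      linarith
    have haneg : a < 0 := lt_of_le_of_ne ha ha0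
    obtain ⟨ξ₀, hξ₀⟩ := hslater
    have := hcone ξ₀
    rw [← hb0] at this
    nlinarith
  · refine ⟨-a/b, div_nonneg (neg_nonneg.mpr ha) hbpos.le, ?_⟩
    intro ξ
    have h := hcone ξ
    have hbne : b ≠ 0 := ne_of_gt hbpos
    have : qf B ξ - (-a/b) * qf A ξ = (a * qf A ξ + b * qf B ξ)/b := by
      field_simp
      ring
    rw [this]
    exact div_nonneg h hbpos.le

end Dines

end SLem
namespace SLem

lemma conj_qf {m k : ℕ} (Δ : Matrix (Fin k) (Fin m) ℝ) (C : Matrix (Fin k) (Fin k) ℝ)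
    (u : Fin m → ℝ) : u ⬝ᵥ ((Δᵀ * C * Δ) *ᵥ u) = qf C (Δ *ᵥ u) := by
  rw [← mulVec_mulVec, ← mulVec_mulVec, dotProduct_mulVec, vecMul_transpose, qf,
    dotProduct_mulVec]

variable {q r : ℕ} {N : Matrix (Fin q ⊕ Fin r) (Fin q ⊕ Fin r) ℝ} (hNs : N.IsSymm)
    (hker : ∀ x : Fin r → ℝ, N.toBlocks₂₂ *ᵥ x = 0 → N.toBlocks₁₂ *ᵥ x = 0)

include hNs hker

lemma qmi_shift_qf (Δ : Matrix (Fin r) (Fin q) ℝ) (u : Fin q → ℝ) :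
    u ⬝ᵥ (qmi N (-(pinv N.toBlocks₂₂ * N.toBlocks₂₁) + Δ) *ᵥ u)
      = qf (schurC N) u + qf N.toBlocks₂₂ (Δ *ᵥ u) := by
  have h := cos_identity hNs hker (-(pinv N.toBlocks₂₂ * N.toBlocks₂₁) + Δ)
  rw [show -(pinv N.toBlocks₂₂ * N.toBlocks₂₁) + Δ + pinv N.toBlocks₂₂ * N.toBlocks₂₁ = Δ by
    abel] at h
  rw [h, add_mulVec, dotProduct_add, conj_qf]
  rfl

lemma leading_coeff_nonneg {c0 c1 c2 : ℝ} (h : ∀ s : ℝ, 0 ≤ c2 * s ^ 2 + c1 * s + c0) :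
    0 ≤ c2 := by
  by_contra hneg
  push_neg at hneg
  set t := Real.sqrt ((|c0| + 1) / (-c2)) with hts
  have hc2ne : c2 ≠ 0 := ne_of_lt hneg
  have ht2 : t ^ 2 = (|c0| + 1) / (-c2) :=
    Real.sq_sqrt (div_nonneg (by positivity) (by linarith))
  have hc2t : c2 * t ^ 2 = -(|c0| + 1) := by
    rw [ht2, mul_div_assoc', div_neg, mul_div_cancel_left₀ _ hc2ne]
  have h1 := h t
  have h2 := h (-t)
  have habs1 := le_abs_self c0
  nlinarith

end SLem
namespace SLem

variable {q r : ℕ}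

lemma key_implication {M N : Matrix (Fin q ⊕ Fin r) (Fin q ⊕ Fin r) ℝ}
    (hNpi : memPi N) (hsub : ZrSet N ⊆ ZrSet M)
    (hslater : ∃ ξ₀ : Fin q ⊕ Fin r → ℝ, 0 < qf N ξ₀) :
    ∀ ξ : Fin q ⊕ Fin r → ℝ, 0 ≤ qf N ξ → 0 ≤ qf M ξ := by
  obtain ⟨hNs, hB, hS, hker⟩ := hNpi
  have hSsymm : (schurC N)ᵀ = schurC N := by
    have := hS.isHermitian
    rwa [Matrix.IsHermitian, conjTranspose_eq_transpose_of_trivial] at this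
  -- generic facts
  have hx0qf : ∀ (P : Matrix (Fin q ⊕ Fin r) (Fin q ⊕ Fin r) ℝ) (z : Fin r → ℝ),
      qf P (Sum.elim 0 z) = z ⬝ᵥ (P.toBlocks₂₂ *ᵥ z) := by
    intro P z
    rw [qf_blocks]
    simp [mulVec_zero]
  have hN22nonpos : ∀ z : Fin r → ℝ, z ⬝ᵥ (N.toBlocks₂₂ *ᵥ z) ≤ 0 := by
    intro z
    have h := qf_nonneg hB z
    rw [qf, neg_mulVec, dotProduct_neg] at h
    linarith
  intro ξ hξ
  set x : Fin q → ℝ := ξ ∘ Sum.inl with hxdef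
  set z : Fin r → ℝ := ξ ∘ Sum.inr with hzdef
  have hxz : ξ = Sum.elim x z := by funext i; cases i <;> rfl
  set K := pinv N.toBlocks₂₂ * N.toBlocks₂₁ with hK
  by_cases hx : x = 0
  · -- case x = 0
    rcases Nat.eq_zero_or_pos q with hq0 | hqpos
    · -- q = 0 : contradiction with Slater
      exfalso
      obtain ⟨ξ₀, hξ₀⟩ := hslater
      have h0 : (ξ₀ ∘ Sum.inl : Fin q → ℝ) = 0 := by
        subst hq0
        funext i
        exact i.elim0
      have hdec : ξ₀ = Sum.elim (0 : Fin q → ℝ) (ξ₀ ∘ Sum.inr) := by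
        funext i
        cases i with
        | inl i => rw [← h0]; rfl
        | inr i => rfl
      rw [hdec, hx0qf] at hξ₀
      exact absurd hξ₀ (not_lt.mpr (hN22nonpos _))
    · -- q > 0
      have hqfN : qf N ξ = z ⬝ᵥ (N.toBlocks₂₂ *ᵥ z) := by rw [hxz, hx, hx0qf]
      have heq : z ⬝ᵥ (N.toBlocks₂₂ *ᵥ z) = 0 :=
        le_antisymm (hN22nonpos z) (by rw [← hqfN]; exact hξ)
      have hzker : N.toBlocks₂₂ *ᵥ z = 0 := by
        have hiff := hB.dotProduct_mulVec_zero_iff z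
        have h1 : star z ⬝ᵥ ((-N.toBlocks₂₂) *ᵥ z) = 0 := by
          simp only [star_trivial, neg_mulVec, dotProduct_neg, heq, neg_zero]
        have := hiff.mp h1
        rw [neg_mulVec, neg_eq_zero] at this
        exact this
      have hz12 : N.toBlocks₁₂ *ᵥ z = 0 := hker z hzker
      have hqfzN : qf N.toBlocks₂₂ z = 0 := heq
      -- the one-parameter family of solutions
      set v : Fin q → ℝ := Pi.single ⟨0, hqpos⟩ 1 with hv
      have hvv : v ⬝ᵥ v = 1 := by
        rw [hv, dotProduct_single]
        simp
      set W := vecMulVec z v with hW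
      have hq2 : qf N.toBlocks₂₂ z = 0 := heq
      have hmem : ∀ s : ℝ, (-K + s • W) ∈ ZrSet N := by
        intro s
        apply posSemidef_of_qf (qmi_transpose hNs _)
        intro u
        have hval := qmi_shift_qf hNs hker (s • W) u
        show 0 ≤ u ⬝ᵥ (qmi N (-K + s • W) *ᵥ u)
        rw [hval, smul_mulVec, hW, vecMulVec_mulVec, smul_smul, qf_smul, hq2,
          mul_zero, add_zero]
        exact qf_nonneg hS u
      -- evaluate qmi M at v
      set z₀ : Fin r → ℝ := (-K) *ᵥ v with hz₀
      set ξ₁ : Fin q ⊕ Fin r → ℝ := Sum.elim v z₀ with hξ₁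
      set ξ₂ : Fin q ⊕ Fin r → ℝ := Sum.elim 0 z with hξ₂
      have hpoly : ∀ s : ℝ, 0 ≤ qf M ξ₂ * s ^ 2
          + (ξ₁ ⬝ᵥ (M *ᵥ ξ₂) + ξ₂ ⬝ᵥ (M *ᵥ ξ₁)) * s + qf M ξ₁ := by
        intro s
        have hmemM := hsub (hmem s)
        have h2 := hmemM.dotProduct_mulVec_nonneg v
        rw [star_trivial] at h2
        rw [qmi_qf] at h2
        have hZv : (-K + s • W) *ᵥ v = z₀ + s • z := by
          rw [add_mulVec, smul_mulVec, hW, vecMulVec_mulVec, hvv, one_smul, hz₀]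
        rw [hZv] at h2
        have hdecomp : Sum.elim v (z₀ + s • z) = ξ₁ + s • ξ₂ := by
          funext i
          cases i with
          | inl i => simp [hξ₁, hξ₂]
          | inr i => simp [hξ₁, hξ₂]
        rw [hdecomp] at h2
        have hexp := qf_smul_add M 1 s ξ₁ ξ₂
        simp only [one_smul, one_pow, one_mul] at hexp
        rw [hexp] at h2
        nlinarith [h2]
      have hc2 := leading_coeff_nonneg hNs hker hpoly
      rw [hxz, hx]
      rw [hξ₂] at hc2
      exact hc2
  · -- case x ≠ 0
    set w : Fin r → ℝ := z + K *ᵥ x with hw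
    have hxx : x ⬝ᵥ x ≠ 0 := fun hc => hx (dotProduct_self_eq_zero.mp hc)
    -- first, with s₁ we derive the scalar identity
    have hscalar : ∀ s : Fin q → ℝ, s ⬝ᵥ x = 1 →
        qf N ξ = qf (schurC N) x + qf N.toBlocks₂₂ w := by
      intro s hs1
      have hZx : (-K + vecMulVec w s) *ᵥ x = z := by
        rw [add_mulVec, vecMulVec_mulVec, hs1, one_smul, neg_mulVec, hw]
        abel
      have hval := qmi_shift_qf hNs hker (vecMulVec w s) x
      rw [vecMulVec_mulVec, hs1, one_smul] at hval
      rw [qmi_qf, hZx, ← hxz] at hval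
      exact hval
    have hkey : qf N ξ = qf (schurC N) x + qf N.toBlocks₂₂ w :=
      hscalar ((x ⬝ᵥ x)⁻¹ • x) (by rw [smul_dotProduct, smul_eq_mul, inv_mul_cancel₀ hxx])
    have hwx : 0 ≤ qf (schurC N) x + qf N.toBlocks₂₂ w := by rw [← hkey]; exact hξ
    have hwnonpos : qf N.toBlocks₂₂ w ≤ 0 := by
      have := hN22nonpos w
      rwa [qf]
    -- choose s
    have hchoice : ∃ s : Fin q → ℝ, s ⬝ᵥ x = 1 ∧
        ∀ u : Fin q → ℝ, 0 ≤ qf (schurC N) u + qf N.toBlocks₂₂ ((s ⬝ᵥ u) • w) := by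
      rcases eq_or_lt_of_le hwnonpos with hw0 | hwneg
      · refine ⟨(x ⬝ᵥ x)⁻¹ • x, by rw [smul_dotProduct, smul_eq_mul, inv_mul_cancel₀ hxx], ?_⟩
        intro u
        rw [qf_smul, hw0, mul_zero, add_zero]
        exact qf_nonneg hS u
      · -- qf N₂₂ w < 0, so qf S x > 0
        have hgpos : 0 < qf (schurC N) x := by linarith
        have hgne : qf (schurC N) x ≠ 0 := ne_of_gt hgpos
        refine ⟨(qf (schurC N) x)⁻¹ • (schurC N *ᵥ x), ?_, ?_⟩
        · rw [smul_dotProduct, smul_eq_mul, dotProduct_comm]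
          rw [show x ⬝ᵥ (schurC N *ᵥ x) = qf (schurC N) x from rfl]
          exact inv_mul_cancel₀ hgne
        · intro u
          set g := qf (schurC N) x with hg
          set d := x ⬝ᵥ (schurC N *ᵥ u) with hd
          have hsu : ((g⁻¹ • (schurC N *ᵥ x)) ⬝ᵥ u) = g⁻¹ * d := by
            rw [smul_dotProduct, smul_eq_mul]
            congr 1
            rw [dotProduct_comm, dotProduct_mulVec, ← mulVec_transpose, hSsymm,
              dotProduct_comm]
          rw [hsu, qf_smul]
          have hCS : d ^ 2 ≤ g * qf (schurC N) u := psd_cauchy_schwarz hS hSsymm x u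
          have hwg : -qf N.toBlocks₂₂ w ≤ g := by linarith
          have hugood : 0 ≤ qf (schurC N) u := qf_nonneg hS u
          have h5 : d ^ 2 * (-qf N.toBlocks₂₂ w) ≤ (g * qf (schurC N) u) * g :=
            mul_le_mul hCS hwg (by linarith) (by positivity)
          have hgoal2 : 0 ≤ g ^ 2 * qf (schurC N) u + d ^ 2 * qf N.toBlocks₂₂ w := by
            nlinarith [h5]
          have hrw : qf (schurC N) u + (g⁻¹ * d) ^ 2 * qf N.toBlocks₂₂ w
              = (g ^ 2 * qf (schurC N) u + d ^ 2 * qf N.toBlocks₂₂ w) / g ^ 2 := by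
            field_simp
          rw [hrw]
          exact div_nonneg hgoal2 (by positivity)
    obtain ⟨s, hs1, hsgood⟩ := hchoice
    have hZx : (-K + vecMulVec w s) *ᵥ x = z := by
      rw [add_mulVec, vecMulVec_mulVec, hs1, one_smul, neg_mulVec, hw]
      abel
    have hmemN : (-K + vecMulVec w s) ∈ ZrSet N := by
      apply posSemidef_of_qf (qmi_transpose hNs _)
      intro u
      have hval := qmi_shift_qf hNs hker (vecMulVec w s) u
      show 0 ≤ u ⬝ᵥ (qmi N (-K + vecMulVec w s) *ᵥ u)
      rw [hval, vecMulVec_mulVec]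
      exact hsgood u
    have hmemM := hsub hmemN
    have h2 := hmemM.dotProduct_mulVec_nonneg x
    rw [star_trivial, qmi_qf, hZx, ← hxz] at h2
    exact h2

end SLem

/-- Matrix S-lemma: If `M − αN ⪰ 0` for some `α ≥ 0`, then
`Z_r(N) ⊆ Z_r(M)`. Conversely, if moreover `N ∈ Π_{q,r}` and `N` has at least
one positive eigenvalue, then `Z_r(N) ⊆ Z_r(M)` iff such an `α ≥ 0` exists. -/
theorem stmt_13 {q r : ℕ} (M N : Matrix (Fin q ⊕ Fin r) (Fin q ⊕ Fin r) ℝ)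
    (hM : M.IsSymm) (hN : N.IsSymm) :
    ((∃ α : ℝ, 0 ≤ α ∧ (M - α • N).PosSemidef) → ZrSet N ⊆ ZrSet M) ∧
    ((memPi N ∧ ∃ μ : ℝ, 0 < μ ∧ Module.End.HasEigenvalue (Matrix.mulVecLin N) μ) →
      (ZrSet N ⊆ ZrSet M ↔ ∃ α : ℝ, 0 ≤ α ∧ (M - α • N).PosSemidef)) := by
  have easy : (∃ α : ℝ, 0 ≤ α ∧ (M - α • N).PosSemidef) → ZrSet N ⊆ ZrSet M := by
    rintro ⟨α, hα, hpsd⟩ Z hZ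
    have hZ' : (qmi N Z).PosSemidef := hZ
    have hlin : qmi M Z = qmi (M - α • N) Z + α • qmi N Z := by
      rw [SLem.qmi_def, SLem.qmi_def, SLem.qmi_def, Matrix.mul_sub, Matrix.sub_mul, Matrix.mul_smul, Matrix.smul_mul,
        sub_add_cancel]
    show (qmi M Z).PosSemidef
    rw [hlin]
    apply PosSemidef.add
    · have h := hpsd.conjTranspose_mul_mul_same (fromRows 1 Z)
      rwa [conjTranspose_eq_transpose_of_trivial] at h
    · apply SLem.posSemidef_of_qf
      · rw [transpose_smul, SLem.qmi_transpose hN]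
      · intro ξ
        have h2 := hZ'.dotProduct_mulVec_nonneg ξ
        rw [star_trivial] at h2
        have : SLem.qf (α • qmi N Z) ξ = α * SLem.qf (qmi N Z) ξ := by
          rw [SLem.qf, SLem.qf, smul_mulVec, dotProduct_smul, smul_eq_mul]
        rw [this]
        exact mul_nonneg hα h2
  refine ⟨easy, fun ⟨hPi, μ, hμ, hEig⟩ => ⟨fun hsub => ?_, easy⟩⟩
  have hslater : ∃ ξ₀ : Fin q ⊕ Fin r → ℝ, 0 < SLem.qf N ξ₀ := by
    obtain ⟨v, hv⟩ := hEig.exists_hasEigenvector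
    refine ⟨v, ?_⟩
    have happ : N *ᵥ v = μ • v := by
      have := hv.apply_eq_smul
      rwa [Matrix.mulVecLin_apply] at this
    have hvv : 0 < v ⬝ᵥ v := by
      rcases lt_or_eq_of_le (Finset.sum_nonneg fun i _ => mul_self_nonneg (v i)
        : 0 ≤ v ⬝ᵥ v) with h | h
      · exact h
      · exact absurd (dotProduct_self_eq_zero.mp h.symm) hv.right
    rw [SLem.qf, happ, dotProduct_smul, smul_eq_mul]
    exact mul_pos hμ hvv
  have himp := SLem.key_implication hPi hsub hslater
  obtain ⟨α, hα, hineq⟩ := SLem.s_lemma himp hslater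
  refine ⟨α, hα, SLem.posSemidef_of_qf ?_ ?_⟩
  · rw [transpose_sub, transpose_smul, hM.eq, hN.eq]
  · intro ξ
    rw [SLem.qf_sub_smul]
    linarith [hineq ξ]
end
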